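/- The character expression for the fiber of the bundle E above a fixed point (d, d'), when specialized by letting q → 1, q' → 1 and all t_l → 1, equals ∑_{i≥j} d_{ij} + ∑_{i≥j} d'_{ij} = 2(d_1 + … + d_n); in particular the rank of E equals half the dimension 4(d_1+…+d_n) of P_d × P_d. -/

import Mathlib

open Filter Topology Finset

private lemma tendsto_ratioC (a : ℤ) :
    Tendsto (fun q : ℂ => (q ^ a - 1) / (q - 1)) (𝓝[≠] (1:ℂ)) (𝓝 (a : ℂ)) := by
  have h := hasDerivAt_zpow a (1:ℂ) (Or.inl one_ne_zero)
  rw [hasDerivAt_iff_tendsto_slope] at h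
  have h2 : ((a:ℂ) * (1:ℂ) ^ (a - 1)) = (a : ℂ) := by simp
  rw [h2] at h
  refine Tendsto.congr (fun q => ?_) h
  simp [slope_def_field]

private lemma tendsto_zero_ratioC (a b : ℤ) :
    Tendsto (fun q : ℂ => (q ^ a - 1) * (q ^ b - 1) / (q - 1)) (𝓝[≠] (1:ℂ)) (𝓝 0) := by
  have h2 : Tendsto (fun q : ℂ => q ^ b - 1) (𝓝[≠] (1:ℂ)) (𝓝 0) := by
    have hc : ContinuousAt (fun q : ℂ => q ^ b - 1) 1 :=
      ((continuousAt_zpow₀ (1:ℂ) b (Or.inl one_ne_zero))).sub continuousAt_const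
    have h3 : Tendsto (fun q : ℂ => q ^ b - 1) (𝓝[≠] (1:ℂ)) (𝓝 ((1:ℂ) ^ b - 1)) :=
      hc.tendsto.mono_left nhdsWithin_le_nhds
    simpa using h3
  have h := (tendsto_ratioC a).mul h2
  rw [mul_zero] at h
  refine Tendsto.congr (fun q => ?_) h
  rw [mul_div_right_comm]

theorem rank_of_E_from_character_limit
    (n : ℕ) (hn : 0 < n) (N : ℕ)
    (d d' : ℤ → ℤ → ℕ)
    (hmono : ∀ i k j : ℤ, j ≤ k → k ≤ i → d i j ≤ d k j)
    (hmono' : ∀ i k j : ℤ, j ≤ k → k ≤ i → d' i j ≤ d' k j)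
    (hper : ∀ i j : ℤ, d (i + n) (j + n) = d i j)
    (hper' : ∀ i j : ℤ, d' (i + n) (j + n) = d' i j)
    (hvan : ∀ i j : ℤ, (N : ℤ) ≤ i - j → d i j = 0)
    (hvan' : ∀ i j : ℤ, (N : ℤ) ≤ i - j → d' i j = 0)
    (hdeg : ∀ k : ℤ, 1 ≤ k → k ≤ n →
      ∑ l ∈ Finset.Icc (k - N) k, d k l = ∑ l ∈ Finset.Icc (k - N) k, d' k l) :
    let fl : ℤ → ℤ := fun l => Int.fdiv (-l) (n : ℤ);
    let charE : ℂ × ℂ × (ℤ → ℂ) → ℂ := fun P =>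
      let q := P.1; let q' := P.2.1; let t := P.2.2;
      ∑ k ∈ Finset.Icc (1:ℤ) n,
        ((∑ l ∈ Finset.Icc (k - N) k, ∑ l' ∈ Finset.Icc (k - N) (k - 1),
            (t l ^ 2 / t l' ^ 2) * q *
              ((q ^ (d' (k-1) l' : ℤ) - 1) * (q ^ (-(d k l : ℤ)) - 1) / (q - 1)) *
              q' ^ (fl l' - fl l))
        + (∑ l' ∈ Finset.Icc (k - N) (k - 1),
            (t k ^ 2 / t l' ^ 2) * q * ((q ^ (d' (k-1) l' : ℤ) - 1) / (q - 1)) *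
              q' ^ (fl l' - fl k))
        - (∑ l ∈ Finset.Icc (k - N) k, ∑ l' ∈ Finset.Icc (k - N) k,
            (t l ^ 2 / t l' ^ 2) * q *
              ((q ^ (d' k l' : ℤ) - 1) * (q ^ (-(d k l : ℤ)) - 1) / (q - 1)) *
              q' ^ (fl l' - fl l))
        - (∑ l ∈ Finset.Icc (k - N) k,
            (t l ^ 2 / t k ^ 2) * q * ((q ^ (-(d k l : ℤ)) - 1) / (q - 1)) *
              q' ^ (fl k - fl l)));
    Filter.Tendsto charE
        (nhdsWithin ((1 : ℂ), (1 : ℂ), fun _ : ℤ => (1 : ℂ)) {P | P.1 ≠ 1})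
        (nhds ((∑ k ∈ Finset.Icc (1:ℤ) n, ∑ l ∈ Finset.Icc (k - N) k, (d k l : ℂ))
          + ∑ k ∈ Finset.Icc (1:ℤ) n, ∑ l ∈ Finset.Icc (k - N) k, (d' k l : ℂ)))
    ∧ (∑ k ∈ Finset.Icc (1:ℤ) n, ∑ l ∈ Finset.Icc (k - N) k, (d k l : ℂ))
        + (∑ k ∈ Finset.Icc (1:ℤ) n, ∑ l ∈ Finset.Icc (k - N) k, (d' k l : ℂ))
      = 2 * ∑ k ∈ Finset.Icc (1:ℤ) n, ∑ l ∈ Finset.Icc (k - N) k, (d k l : ℂ) := by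
  intro fl charE
  have hn' : (1:ℤ) ≤ (n:ℤ) := by exact_mod_cast hn
  -- the degree equality, cast to ℂ
  have hDD' : (∑ k ∈ Finset.Icc (1:ℤ) n, ∑ l ∈ Finset.Icc (k - N) k, (d k l : ℂ))
      = ∑ k ∈ Finset.Icc (1:ℤ) n, ∑ l ∈ Finset.Icc (k - N) k, (d' k l : ℂ) := by
    refine Finset.sum_congr rfl fun k hk => ?_
    rw [Finset.mem_Icc] at hk
    have h := congrArg (fun m : ℕ => (m : ℂ)) (hdeg k hk.1 hk.2)
    push_cast at h
    exact h
  -- reindexing of the d' sums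
  have hstepa : ∀ k : ℤ, (∑ l' ∈ Finset.Icc (k - N) (k-1), (d' (k-1) l' : ℂ))
      = ∑ l ∈ Finset.Icc (k - 1 - N) (k-1), (d' (k-1) l : ℂ) := by
    intro k
    refine Finset.sum_subset ?_ ?_
    · apply Finset.Icc_subset_Icc_left; omega
    · intro x hx hx'
      rw [Finset.mem_Icc] at hx
      rw [Finset.mem_Icc] at hx'
      have h : d' (k-1) x = 0 := hvan' _ _ (by omega)
      simp [h]
  have hGper : ∀ m : ℤ, (∑ l ∈ Finset.Icc (m + n - N) (m + n), (d' (m + n) l : ℂ))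
      = ∑ l ∈ Finset.Icc (m - N) m, (d' m l : ℂ) := by
    intro m
    have hmap : Finset.Icc (m + n - N) (m + n)
        = (Finset.Icc (m - N) m).map (addRightEmbedding (n:ℤ)) := by
      rw [Finset.map_add_right_Icc]; congr 1; ring
    rw [hmap, Finset.sum_map]
    refine Finset.sum_congr rfl fun l _ => ?_
    simp [addRightEmbedding_apply, hper' m l]
  have hshift : (∑ k ∈ Finset.Icc (1:ℤ) n, ∑ l' ∈ Finset.Icc (k - N) (k-1), (d' (k-1) l' : ℂ))
      = ∑ k ∈ Finset.Icc (1:ℤ) n, ∑ l ∈ Finset.Icc (k - N) k, (d' k l : ℂ) := by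
    have e0 : (∑ k ∈ Finset.Icc (1:ℤ) n, ∑ l' ∈ Finset.Icc (k - N) (k-1), (d' (k-1) l' : ℂ))
        = ∑ k ∈ Finset.Icc (1:ℤ) n, ∑ l ∈ Finset.Icc (k - 1 - N) (k-1), (d' (k-1) l : ℂ) :=
      Finset.sum_congr rfl fun k _ => hstepa k
    have hmap : (Finset.Icc (1:ℤ) n).map (addRightEmbedding (-1:ℤ))
        = Finset.Icc (0:ℤ) ((n:ℤ)-1) := by
      rw [Finset.map_add_right_Icc]; congr 1 <;> ring
    have e1 : (∑ k ∈ Finset.Icc (1:ℤ) n, ∑ l ∈ Finset.Icc (k - 1 - N) (k-1), (d' (k-1) l : ℂ))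
        = ∑ m ∈ Finset.Icc (0:ℤ) ((n:ℤ)-1), ∑ l ∈ Finset.Icc (m - N) m, (d' m l : ℂ) := by
      rw [← hmap, Finset.sum_map]
      refine Finset.sum_congr rfl fun k _ => ?_
      rw [addRightEmbedding_apply]
      have hk1 : k + -1 = k - 1 := by ring
      rw [hk1]
    have h0 : Finset.Icc (0:ℤ) ((n:ℤ)-1) = insert 0 (Finset.Icc (1:ℤ) ((n:ℤ)-1)) := by
      ext x; simp only [Finset.mem_Icc, Finset.mem_insert]; omega
    have h1 : Finset.Icc (1:ℤ) (n:ℤ) = insert (n:ℤ) (Finset.Icc (1:ℤ) ((n:ℤ)-1)) := by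
      ext x; simp only [Finset.mem_Icc, Finset.mem_insert]; omega
    have hn0 : (0:ℤ) ∉ Finset.Icc (1:ℤ) ((n:ℤ)-1) := by simp
    have hnn : (n:ℤ) ∉ Finset.Icc (1:ℤ) ((n:ℤ)-1) := by simp
    have hG0 : (∑ l ∈ Finset.Icc ((0:ℤ) - N) (0:ℤ), (d' 0 l : ℂ))
        = ∑ l ∈ Finset.Icc ((n:ℤ) - N) (n:ℤ), (d' n l : ℂ) := by
      have h := hGper 0
      rw [zero_add] at h
      exact h.symm
    have e2 : (∑ m ∈ Finset.Icc (0:ℤ) ((n:ℤ)-1), ∑ l ∈ Finset.Icc (m - N) m, (d' m l : ℂ))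
        = ∑ m ∈ Finset.Icc (1:ℤ) (n:ℤ), ∑ l ∈ Finset.Icc (m - N) m, (d' m l : ℂ) := by
      rw [h0, h1, Finset.sum_insert hn0, Finset.sum_insert hnn, hG0]
    rw [e0, e1, e2]
  -- tendsto infrastructure
  set F : Filter (ℂ × ℂ × (ℤ → ℂ)) :=
    nhdsWithin ((1 : ℂ), (1 : ℂ), fun _ : ℤ => (1 : ℂ)) {P | P.1 ≠ 1} with hF
  have hq1 : Tendsto (fun P : ℂ × ℂ × (ℤ → ℂ) => P.1) F (𝓝[≠] (1:ℂ)) := by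
    refine tendsto_nhdsWithin_of_tendsto_nhds_of_eventually_within _ ?_ ?_
    · exact (continuous_fst.tendsto _).mono_left nhdsWithin_le_nhds
    · filter_upwards [self_mem_nhdsWithin] with P hP using hP
  have hq1n : Tendsto (fun P : ℂ × ℂ × (ℤ → ℂ) => P.1) F (𝓝 1) :=
    hq1.mono_right nhdsWithin_le_nhds
  have hq2 : Tendsto (fun P : ℂ × ℂ × (ℤ → ℂ) => P.2.1) F (𝓝 1) :=
    ((continuous_fst.comp continuous_snd).tendsto _).mono_left nhdsWithin_le_nhds
  have ht : ∀ l : ℤ, Tendsto (fun P : ℂ × ℂ × (ℤ → ℂ) => P.2.2 l) F (𝓝 1) := fun l =>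
    (((continuous_apply l).comp (continuous_snd.comp continuous_snd)).tendsto _).mono_left
      nhdsWithin_le_nhds
  have hcoef : ∀ l l' : ℤ,
      Tendsto (fun P : ℂ × ℂ × (ℤ → ℂ) => P.2.2 l ^ 2 / P.2.2 l' ^ 2) F (𝓝 1) := by
    intro l l'
    have h := ((ht l).pow 2).div ((ht l').pow 2) (by norm_num)
    simp at h; exact h
  have hq'pow : ∀ e : ℤ, Tendsto (fun P : ℂ × ℂ × (ℤ → ℂ) => P.2.1 ^ e) F (𝓝 1) := by
    intro e
    have hc : ContinuousAt (fun q : ℂ => q ^ e) 1 := continuousAt_zpow₀ 1 e (Or.inl one_ne_zero)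
    have h := hc.tendsto.comp hq2
    simp at h; exact h
  have hT0 : ∀ (a b e l l' : ℤ),
      Tendsto (fun P : ℂ × ℂ × (ℤ → ℂ) =>
        (P.2.2 l ^ 2 / P.2.2 l' ^ 2) * P.1 * ((P.1 ^ a - 1) * (P.1 ^ b - 1) / (P.1 - 1))
          * P.2.1 ^ e) F (𝓝 0) := by
    intro a b e l l'
    have h := (((hcoef l l').mul hq1n).mul ((tendsto_zero_ratioC a b).comp hq1)).mul (hq'pow e)
    simpa using h
  have hT1 : ∀ (a e l l' : ℤ),
      Tendsto (fun P : ℂ × ℂ × (ℤ → ℂ) =>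
        (P.2.2 l ^ 2 / P.2.2 l' ^ 2) * P.1 * ((P.1 ^ a - 1) / (P.1 - 1)) * P.2.1 ^ e)
        F (𝓝 (a : ℂ)) := by
    intro a e l l'
    have h := (((hcoef l l').mul hq1n).mul ((tendsto_ratioC a).comp hq1)).mul (hq'pow e)
    simpa using h
  constructor
  · have main : Tendsto charE F (𝓝 (∑ k ∈ Finset.Icc (1:ℤ) n,
        ((((∑ l ∈ Finset.Icc (k - N) k, ∑ _l' ∈ Finset.Icc (k - N) (k-1), (0:ℂ))
          + ∑ l' ∈ Finset.Icc (k - N) (k-1), ((d' (k-1) l' : ℤ) : ℂ))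
          - ∑ l ∈ Finset.Icc (k - N) k, ∑ _l' ∈ Finset.Icc (k - N) k, (0:ℂ))
          - ∑ l ∈ Finset.Icc (k - N) k, ((-(d k l : ℤ) : ℤ) : ℂ)))) := by
      apply tendsto_finset_sum
      intro k _
      refine Tendsto.sub (Tendsto.sub (Tendsto.add ?_ ?_) ?_) ?_
      · exact tendsto_finset_sum _ fun l _ => tendsto_finset_sum _ fun l' _ => hT0 _ _ _ _ _
      · exact tendsto_finset_sum _ fun l' _ => hT1 _ _ _ _
      · exact tendsto_finset_sum _ fun l _ => tendsto_finset_sum _ fun l' _ => hT0 _ _ _ _ _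
      · exact tendsto_finset_sum _ fun l _ => hT1 _ _ _ _
    have hL : (∑ k ∈ Finset.Icc (1:ℤ) n,
        ((((∑ l ∈ Finset.Icc (k - N) k, ∑ _l' ∈ Finset.Icc (k - N) (k-1), (0:ℂ))
          + ∑ l' ∈ Finset.Icc (k - N) (k-1), ((d' (k-1) l' : ℤ) : ℂ))
          - ∑ l ∈ Finset.Icc (k - N) k, ∑ _l' ∈ Finset.Icc (k - N) k, (0:ℂ))
          - ∑ l ∈ Finset.Icc (k - N) k, ((-(d k l : ℤ) : ℤ) : ℂ)))
        = (∑ k ∈ Finset.Icc (1:ℤ) n, ∑ l ∈ Finset.Icc (k - N) k, (d k l : ℂ))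
          + ∑ k ∈ Finset.Icc (1:ℤ) n, ∑ l ∈ Finset.Icc (k - N) k, (d' k l : ℂ) := by
      have step : ∀ k ∈ Finset.Icc (1:ℤ) n,
          ((((∑ l ∈ Finset.Icc (k - N) k, ∑ _l' ∈ Finset.Icc (k - N) (k-1), (0:ℂ))
          + ∑ l' ∈ Finset.Icc (k - N) (k-1), ((d' (k-1) l' : ℤ) : ℂ))
          - ∑ l ∈ Finset.Icc (k - N) k, ∑ _l' ∈ Finset.Icc (k - N) k, (0:ℂ))
          - ∑ l ∈ Finset.Icc (k - N) k, ((-(d k l : ℤ) : ℤ) : ℂ))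
          = (∑ l' ∈ Finset.Icc (k - N) (k-1), (d' (k-1) l' : ℂ))
            + ∑ l ∈ Finset.Icc (k - N) k, (d k l : ℂ) := by
        intro k _
        push_cast
        simp [Finset.sum_neg_distrib, sub_neg_eq_add]
      rw [Finset.sum_congr rfl step, Finset.sum_add_distrib, hshift, add_comm]
    rw [← hL]
    exact main
  · rw [hDD']
    ring
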